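/- (Power-scaling Case II) If α = 1, 0 < ε < 1 and γ > 0, then lim_{M→∞} R̃_i(M) = λ·log₂(1 + E_u·(ψ_{AR,i}² + ψ_{BR,i}²)/(ψ_{AR,i} + ψ_{BR,i})); that is, the asymptotic spectral efficiency is determined by the uplink phase and is independent of E_r. -/

import Mathlib

open Real Filter Topology Finset

noncomputable section

/-- `η = τ·p_p·β/(1+τ·p_p·β)`. -/
def etaP (τ pp β : ℝ) : ℝ := τ * pp * β / (1 + τ * pp * β)

/-- `ω = β(K+η)/(K+1)`. -/
def omegaP (τ pp β K : ℝ) : ℝ := β * (K + etaP τ pp β) / (K + 1)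

/-- `σ² = β/((1+τ·p_p·β)(K+1))`. -/
def sigma2P (τ pp β K : ℝ) : ℝ := β / ((1 + τ * pp * β) * (K + 1))

/-- Generic interference coefficient: with `(b₁,k₁)` and `(b₂,k₂)` the two links involved,
`b₁·b₂/((k₁+1)(k₂+1))·[(k₁+η₁)/(1+τ·p_p·b₂) + k₂·η₁ + k₁·η₂ + η₁·η₂]`.
It specializes to `ξ_{XR,ij}`, `χ_{XR,ij}` and `ζ_{XR,ij}` of (25)–(27). -/
def xiP (τ pp b1 k1 b2 k2 : ℝ) : ℝ :=
  b1 * b2 / ((k1 + 1) * (k2 + 1)) *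
    ((k1 + etaP τ pp b1) / (1 + τ * pp * b2) + k2 * etaP τ pp b1
      + k1 * etaP τ pp b2 + etaP τ pp b1 * etaP τ pp b2)

variable {N : ℕ}

/-- `q_i = p_u σ²_{AR,i} + p_u σ²_{BR,i} + 1`. -/
def qP (τ pp pu : ℝ) (βA βB KA KB : Fin N → ℝ) (i : Fin N) : ℝ :=
  pu * sigma2P τ pp (βA i) (KA i) + pu * sigma2P τ pp (βB i) (KB i) + 1

/-- `Q_i = Σ_{j≠i} p_u·(ξ_{AR,ij}+ξ_{BR,ij}+χ_{AR,ij}+χ_{BR,ij})`. -/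
def QP (τ pp pu : ℝ) (βA βB KA KB : Fin N → ℝ) (i : Fin N) : ℝ :=
  ∑ j ∈ Finset.univ \ {i},
    pu * (xiP τ pp (βA i) (KA i) (βA j) (KA j) + xiP τ pp (βB i) (KB i) (βA j) (KA j)
      + xiP τ pp (βA i) (KA i) (βB j) (KB j) + xiP τ pp (βB i) (KB i) (βB j) (KB j))

/-- `Z_{ij} = p_r·(ζ_{AR,ij}+ζ_{BR,ij})`. -/
def ZP (τ pp pr : ℝ) (βA βB KA KB : Fin N → ℝ) (i j : Fin N) : ℝ :=
  pr * (xiP τ pp (βA j) (KA j) (βA i) (KA i) + xiP τ pp (βB j) (KB j) (βA i) (KA i))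

/-- `R̃_{1,i}(M)` of Theorem 1 (uplink phase). -/
def R1P (lam τ pp pu : ℝ) (βA βB KA KB : Fin N → ℝ) (i : Fin N) (M : ℝ) : ℝ :=
  lam * logb 2 (1 +
    (M * pu * (omegaP τ pp (βA i) (KA i)) ^ 2 + M * pu * (omegaP τ pp (βB i) (KB i)) ^ 2)
      / ((omegaP τ pp (βA i) (KA i) + omegaP τ pp (βB i) (KB i)) * qP τ pp pu βA βB KA KB i
          + QP τ pp pu βA βB KA KB i))

/-- `R̃_{AR,i}(M)` of Theorem 1. -/
def RARP (lam τ pp pu : ℝ) (βA βB KA KB : Fin N → ℝ) (i : Fin N) (M : ℝ) : ℝ :=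
  lam * logb 2 (1 + M * pu * (omegaP τ pp (βA i) (KA i)) ^ 2
      / ((omegaP τ pp (βA i) (KA i) + omegaP τ pp (βB i) (KB i)) * qP τ pp pu βA βB KA KB i
          + QP τ pp pu βA βB KA KB i))

/-- `R̃_{BR,i}(M)` of Theorem 1. -/
def RBRP (lam τ pp pu : ℝ) (βA βB KA KB : Fin N → ℝ) (i : Fin N) (M : ℝ) : ℝ :=
  lam * logb 2 (1 + M * pu * (omegaP τ pp (βB i) (KB i)) ^ 2
      / ((omegaP τ pp (βA i) (KA i) + omegaP τ pp (βB i) (KB i)) * qP τ pp pu βA βB KA KB i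
          + QP τ pp pu βA βB KA KB i))

/-- `R̃_{RA,i}(M)` of Theorem 1 (downlink to `U_{A,i}`). -/
def RRAP (lam τ pp pr : ℝ) (βA βB KA KB : Fin N → ℝ) (i : Fin N) (M : ℝ) : ℝ :=
  lam * logb 2 (1 + M * pr * (omegaP τ pp (βA i) (KA i)) ^ 2
      / (∑ j, (omegaP τ pp (βA j) (KA j) + omegaP τ pp (βB j) (KB j)
          + ZP τ pp pr βA βB KA KB i j)))

/-- `R̃_{RB,i}(M)` of Theorem 1 (downlink to `U_{B,i}`). -/
def RRBP (lam τ pp pr : ℝ) (βA βB KA KB : Fin N → ℝ) (i : Fin N) (M : ℝ) : ℝ :=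
  lam * logb 2 (1 + M * pr * (omegaP τ pp (βB i) (KB i)) ^ 2
      / (∑ j, (omegaP τ pp (βA j) (KA j) + omegaP τ pp (βB j) (KB j)
          + ZP τ pp pr βA βB KA KB i j)))

/-- `R̃_{2,i}(M) = min(R̃_{AR,i}, R̃_{RB,i}) + min(R̃_{BR,i}, R̃_{RA,i})`. -/
def R2P (lam τ pp pu pr : ℝ) (βA βB KA KB : Fin N → ℝ) (i : Fin N) (M : ℝ) : ℝ :=
  min (RARP lam τ pp pu βA βB KA KB i M) (RRBP lam τ pp pr βA βB KA KB i M)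
    + min (RBRP lam τ pp pu βA βB KA KB i M) (RRAP lam τ pp pr βA βB KA KB i M)

/-- `R̃_i(M) = min(R̃_{1,i}(M), R̃_{2,i}(M))`. -/
def RtotP (lam τ pp pu pr : ℝ) (βA βB KA KB : Fin N → ℝ) (i : Fin N) (M : ℝ) : ℝ :=
  min (R1P lam τ pp pu βA βB KA KB i M) (R2P lam τ pp pu pr βA βB KA KB i M)

end


section Helpers

open Real Filter Topology Finset

private lemma tendsto_min_atTop_right {f g : ℕ → ℝ} {a : ℝ}
    (hf : Tendsto f atTop (𝓝 a)) (hg : Tendsto g atTop atTop) :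
    Tendsto (fun n => min (f n) (g n)) atTop (𝓝 a) := by
  have h1 : ∀ᶠ n in atTop, f n < a + 1 := hf.eventually (eventually_lt_nhds (lt_add_one a))
  have h2 : ∀ᶠ n in atTop, a + 1 ≤ g n := hg.eventually_ge_atTop (a + 1)
  refine Tendsto.congr' ?_ hf
  filter_upwards [h1, h2] with n hn1 hn2
  exact (min_eq_left (le_of_lt (lt_of_lt_of_le hn1 hn2))).symm

private lemma aux_lin {pp : ℕ → ℝ} (τ β : ℝ) (hpp : Tendsto pp atTop (𝓝 0)) :
    Tendsto (fun n => τ * pp n * β) atTop (𝓝 0) := by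
  have := (hpp.const_mul τ).mul_const β
  simpa using this

private lemma tendsto_etaP {pp : ℕ → ℝ} (τ β : ℝ) (hpp : Tendsto pp atTop (𝓝 0)) :
    Tendsto (fun n => etaP τ (pp n) β) atTop (𝓝 0) := by
  have h1 := aux_lin τ β hpp
  have h2 : Tendsto (fun n => 1 + τ * pp n * β) atTop (𝓝 1) := by
    simpa using (tendsto_const_nhds.add h1)
  have := h1.div h2 one_ne_zero
  simpa [etaP] using (show Tendsto (fun n => τ * pp n * β / (1 + τ * pp n * β)) atTop (𝓝 (0 / 1)) from this)

private lemma tendsto_omegaP {pp : ℕ → ℝ} (τ β K : ℝ) (hpp : Tendsto pp atTop (𝓝 0)) :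
    Tendsto (fun n => omegaP τ (pp n) β K) atTop (𝓝 (β * K / (K + 1))) := by
  have hη := tendsto_etaP τ β hpp
  have : Tendsto (fun n => β * (K + etaP τ (pp n) β) / (K + 1)) atTop
      (𝓝 (β * (K + 0) / (K + 1))) :=
    Tendsto.div_const ((tendsto_const_nhds.add hη).const_mul β) (K + 1)
  simpa [omegaP] using this

private lemma tendsto_sigma2P {pp : ℕ → ℝ} (τ β K : ℝ) (hK : K + 1 ≠ 0)
    (hpp : Tendsto pp atTop (𝓝 0)) :
    Tendsto (fun n => sigma2P τ (pp n) β K) atTop (𝓝 (β / (K + 1))) := by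
  have h1 := aux_lin τ β hpp
  have h2 : Tendsto (fun n => (1 + τ * pp n * β) * (K + 1)) atTop (𝓝 ((1 + 0) * (K + 1))) :=
    (tendsto_const_nhds.add h1).mul_const (K + 1)
  have := (tendsto_const_nhds (x := β)).div h2 (by simpa using hK)
  simpa [sigma2P] using (show Tendsto (fun n => β / ((1 + τ * pp n * β) * (K + 1))) atTop
    (𝓝 (β / ((1 + 0) * (K + 1)))) from this)

private lemma tendsto_xiP {pp : ℕ → ℝ} (τ b1 k1 b2 k2 : ℝ) (hpp : Tendsto pp atTop (𝓝 0)) :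
    Tendsto (fun n => xiP τ (pp n) b1 k1 b2 k2) atTop
      (𝓝 (b1 * b2 / ((k1 + 1) * (k2 + 1)) * k1)) := by
  have hη1 := tendsto_etaP τ b1 hpp
  have hη2 := tendsto_etaP τ b2 hpp
  have hd : Tendsto (fun n => 1 + τ * pp n * b2) atTop (𝓝 1) := by
    simpa using (tendsto_const_nhds.add (aux_lin τ b2 hpp))
  have hbr : Tendsto (fun n => (k1 + etaP τ (pp n) b1) / (1 + τ * pp n * b2)
      + k2 * etaP τ (pp n) b1 + k1 * etaP τ (pp n) b2
      + etaP τ (pp n) b1 * etaP τ (pp n) b2) atTop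
      (𝓝 ((k1 + 0) / 1 + k2 * 0 + k1 * 0 + 0 * 0)) :=
    ((((tendsto_const_nhds.add hη1).div hd one_ne_zero).add (hη1.const_mul k2)).add
      (hη2.const_mul k1)).add (hη1.mul hη2)
  have := hbr.const_mul (b1 * b2 / ((k1 + 1) * (k2 + 1)))
  simpa [xiP] using this

end Helpers


section MainAux

open Real Filter Topology Finset

private lemma main_aux {N : ℕ} (i : Fin N) (τ lam Eu : ℝ)
    (hlam0 : 0 < lam) (hEu : 0 < Eu)
    (βA βB KA KB : Fin N → ℝ)
    (hβA : ∀ j, 0 < βA j) (hβB : ∀ j, 0 < βB j)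
    (hKA : ∀ j, 0 < KA j) (hKB : ∀ j, 0 < KB j)
    (psiA psiB : Fin N → ℝ)
    (hpsiA : ∀ j, psiA j = βA j * KA j / (KA j + 1))
    (hpsiB : ∀ j, psiB j = βB j * KB j / (KB j + 1))
    (pp pu pr : ℕ → ℝ)
    (hpp : Tendsto pp atTop (𝓝 0)) (hpu : Tendsto pu atTop (𝓝 0))
    (hpr : Tendsto pr atTop (𝓝 0))
    (hMpu : Tendsto (fun M : ℕ => (M : ℝ) * pu M) atTop (𝓝 Eu))
    (hMpr : Tendsto (fun M : ℕ => (M : ℝ) * pr M) atTop atTop) :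
    Tendsto (fun M : ℕ => RtotP lam τ (pp M) (pu M) (pr M) βA βB KA KB i (M : ℝ)) atTop
      (𝓝 (lam * logb 2 (1 + Eu * ((psiA i) ^ 2 + (psiB i) ^ 2) / (psiA i + psiB i)))) := by
  -- positivity facts
  have hψA : ∀ j, 0 < psiA j := fun j => by
    rw [hpsiA j]; exact div_pos (mul_pos (hβA j) (hKA j)) (by linarith [hKA j])
  have hψB : ∀ j, 0 < psiB j := fun j => by
    rw [hpsiB j]; exact div_pos (mul_pos (hβB j) (hKB j)) (by linarith [hKB j])
  have hD : 0 < psiA i + psiB i := add_pos (hψA i) (hψB i)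
  have hS : 0 < ∑ j, (psiA j + psiB j) :=
    Finset.sum_pos (fun j _ => add_pos (hψA j) (hψB j)) ⟨i, Finset.mem_univ i⟩
  have hKA1 : ∀ j, (KA j + 1) ≠ 0 := fun j => by have := hKA j; linarith
  have hKB1 : ∀ j, (KB j + 1) ≠ 0 := fun j => by have := hKB j; linarith
  -- convergence of the deterministic-equivalent building blocks
  have hωA : ∀ j, Tendsto (fun M => omegaP τ (pp M) (βA j) (KA j)) atTop (𝓝 (psiA j)) := by
    intro j; rw [hpsiA j]; exact tendsto_omegaP τ (βA j) (KA j) hpp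
  have hωB : ∀ j, Tendsto (fun M => omegaP τ (pp M) (βB j) (KB j)) atTop (𝓝 (psiB j)) := by
    intro j; rw [hpsiB j]; exact tendsto_omegaP τ (βB j) (KB j) hpp
  have hq : Tendsto (fun M => qP τ (pp M) (pu M) βA βB KA KB i) atTop (𝓝 1) := by
    have hσA := tendsto_sigma2P τ (βA i) (KA i) (hKA1 i) hpp
    have hσB := tendsto_sigma2P τ (βB i) (KB i) (hKB1 i) hpp
    have := ((hpu.mul hσA).add (hpu.mul hσB)).add
      (tendsto_const_nhds : Tendsto (fun _ : ℕ => (1:ℝ)) atTop (𝓝 1))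
    simpa [qP] using this
  have hQ : Tendsto (fun M => QP τ (pp M) (pu M) βA βB KA KB i) atTop (𝓝 0) := by
    have h : ∀ j ∈ Finset.univ \ {i}, Tendsto (fun M => pu M *
        (xiP τ (pp M) (βA i) (KA i) (βA j) (KA j) + xiP τ (pp M) (βB i) (KB i) (βA j) (KA j)
          + xiP τ (pp M) (βA i) (KA i) (βB j) (KB j)
          + xiP τ (pp M) (βB i) (KB i) (βB j) (KB j))) atTop (𝓝 0) := by
      intro j _
      have h1 := tendsto_xiP τ (βA i) (KA i) (βA j) (KA j) hpp
      have h2 := tendsto_xiP τ (βB i) (KB i) (βA j) (KA j) hpp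
      have h3 := tendsto_xiP τ (βA i) (KA i) (βB j) (KB j) hpp
      have h4 := tendsto_xiP τ (βB i) (KB i) (βB j) (KB j) hpp
      have := hpu.mul (((h1.add h2).add h3).add h4)
      simpa using this
    have := tendsto_finset_sum (Finset.univ \ {i}) h
    simpa [QP] using this
  have hDen : Tendsto (fun M =>
      (omegaP τ (pp M) (βA i) (KA i) + omegaP τ (pp M) (βB i) (KB i))
        * qP τ (pp M) (pu M) βA βB KA KB i + QP τ (pp M) (pu M) βA βB KA KB i) atTop
      (𝓝 (psiA i + psiB i)) := by
    have := (((hωA i).add (hωB i)).mul hq).add hQ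
    simpa using this
  have hZ : ∀ j, Tendsto (fun M => ZP τ (pp M) (pr M) βA βB KA KB i j) atTop (𝓝 0) := by
    intro j
    have h1 := tendsto_xiP τ (βA j) (KA j) (βA i) (KA i) hpp
    have h2 := tendsto_xiP τ (βB j) (KB j) (βA i) (KA i) hpp
    have := hpr.mul (h1.add h2)
    simpa [ZP] using this
  have hSum : Tendsto (fun M => ∑ j, (omegaP τ (pp M) (βA j) (KA j)
      + omegaP τ (pp M) (βB j) (KB j) + ZP τ (pp M) (pr M) βA βB KA KB i j)) atTop
      (𝓝 (∑ j, (psiA j + psiB j))) := by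
    have := tendsto_finset_sum (Finset.univ)
      (fun j (_ : j ∈ Finset.univ) => (((hωA j).add (hωB j)).add (hZ j)))
    simpa using this
  -- uplink-phase rates
  have hcA : (0:ℝ) < 1 + Eu * psiA i ^ 2 / (psiA i + psiB i) := by
    have : 0 < Eu * psiA i ^ 2 / (psiA i + psiB i) :=
      div_pos (mul_pos hEu (pow_pos (hψA i) 2)) hD
    linarith
  have hcB : (0:ℝ) < 1 + Eu * psiB i ^ 2 / (psiA i + psiB i) := by
    have : 0 < Eu * psiB i ^ 2 / (psiA i + psiB i) :=
      div_pos (mul_pos hEu (pow_pos (hψB i) 2)) hD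
    linarith
  have hRAR : Tendsto (fun M => RARP lam τ (pp M) (pu M) βA βB KA KB i (M:ℝ)) atTop
      (𝓝 (lam * logb 2 (1 + Eu * psiA i ^ 2 / (psiA i + psiB i)))) := by
    have harg := (tendsto_const_nhds : Tendsto (fun _ : ℕ => (1:ℝ)) atTop (𝓝 1)).add ((hMpu.mul ((hωA i).pow 2)).div hDen hD.ne')
    have := Filter.Tendsto.const_mul lam
      (((Real.continuousAt_logb (b := 2) hcA.ne').tendsto).comp harg)
    simpa [RARP, Function.comp, Pi.div_apply] using this
  have hRBR : Tendsto (fun M => RBRP lam τ (pp M) (pu M) βA βB KA KB i (M:ℝ)) atTop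
      (𝓝 (lam * logb 2 (1 + Eu * psiB i ^ 2 / (psiA i + psiB i)))) := by
    have harg := (tendsto_const_nhds : Tendsto (fun _ : ℕ => (1:ℝ)) atTop (𝓝 1)).add ((hMpu.mul ((hωB i).pow 2)).div hDen hD.ne')
    have := Filter.Tendsto.const_mul lam
      (((Real.continuousAt_logb (b := 2) hcB.ne').tendsto).comp harg)
    simpa [RBRP, Function.comp, Pi.div_apply] using this
  have hc1 : (0:ℝ) < 1 + Eu * (psiA i ^ 2 + psiB i ^ 2) / (psiA i + psiB i) := by
    have : 0 < Eu * (psiA i ^ 2 + psiB i ^ 2) / (psiA i + psiB i) := by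
      apply div_pos _ hD
      exact mul_pos hEu (add_pos (pow_pos (hψA i) 2) (pow_pos (hψB i) 2))
    linarith
  have hR1 : Tendsto (fun M => R1P lam τ (pp M) (pu M) βA βB KA KB i (M:ℝ)) atTop
      (𝓝 (lam * logb 2 (1 + Eu * (psiA i ^ 2 + psiB i ^ 2) / (psiA i + psiB i)))) := by
    have harg := (tendsto_const_nhds : Tendsto (fun _ : ℕ => (1:ℝ)) atTop (𝓝 1)).add
      (((hMpu.mul ((hωA i).pow 2)).add (hMpu.mul ((hωB i).pow 2))).div hDen hD.ne')
    have hargeq : (1:ℝ) + (Eu * psiA i ^ 2 + Eu * psiB i ^ 2) / (psiA i + psiB i)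
        = 1 + Eu * (psiA i ^ 2 + psiB i ^ 2) / (psiA i + psiB i) := by ring
    rw [hargeq] at harg
    have := Filter.Tendsto.const_mul lam
      (((Real.continuousAt_logb (b := 2) hc1.ne').tendsto).comp harg)
    simpa [R1P, Function.comp, Pi.div_apply] using this
  -- downlink-phase rates blow up
  have hRRA : Tendsto (fun M => RRAP lam τ (pp M) (pr M) βA βB KA KB i (M:ℝ)) atTop atTop := by
    have hfrac : Tendsto (fun M => omegaP τ (pp M) (βA i) (KA i) ^ 2
        / (∑ j, (omegaP τ (pp M) (βA j) (KA j) + omegaP τ (pp M) (βB j) (KB j)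
            + ZP τ (pp M) (pr M) βA βB KA KB i j))) atTop
        (𝓝 (psiA i ^ 2 / ∑ j, (psiA j + psiB j))) := ((hωA i).pow 2).div hSum hS.ne'
    have hmul := Filter.Tendsto.atTop_mul_pos
      (div_pos (pow_pos (hψA i) 2) hS) hMpr hfrac
    have hinner : Tendsto (fun M : ℕ => (M:ℝ) * pr M * omegaP τ (pp M) (βA i) (KA i) ^ 2
        / (∑ j, (omegaP τ (pp M) (βA j) (KA j) + omegaP τ (pp M) (βB j) (KB j)
            + ZP τ (pp M) (pr M) βA βB KA KB i j))) atTop atTop :=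
      hmul.congr fun M => (mul_div_assoc _ _ _).symm
    have := Filter.Tendsto.const_mul_atTop hlam0
      ((Real.tendsto_logb_atTop one_lt_two).comp (tendsto_atTop_add_const_left atTop 1 hinner))
    simpa [RRAP, Function.comp] using this
  have hRRB : Tendsto (fun M => RRBP lam τ (pp M) (pr M) βA βB KA KB i (M:ℝ)) atTop atTop := by
    have hfrac : Tendsto (fun M => omegaP τ (pp M) (βB i) (KB i) ^ 2
        / (∑ j, (omegaP τ (pp M) (βA j) (KA j) + omegaP τ (pp M) (βB j) (KB j)
            + ZP τ (pp M) (pr M) βA βB KA KB i j))) atTop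
        (𝓝 (psiB i ^ 2 / ∑ j, (psiA j + psiB j))) := ((hωB i).pow 2).div hSum hS.ne'
    have hmul := Filter.Tendsto.atTop_mul_pos
      (div_pos (pow_pos (hψB i) 2) hS) hMpr hfrac
    have hinner : Tendsto (fun M : ℕ => (M:ℝ) * pr M * omegaP τ (pp M) (βB i) (KB i) ^ 2
        / (∑ j, (omegaP τ (pp M) (βA j) (KA j) + omegaP τ (pp M) (βB j) (KB j)
            + ZP τ (pp M) (pr M) βA βB KA KB i j))) atTop atTop :=
      hmul.congr fun M => (mul_div_assoc _ _ _).symm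
    have := Filter.Tendsto.const_mul_atTop hlam0
      ((Real.tendsto_logb_atTop one_lt_two).comp (tendsto_atTop_add_const_left atTop 1 hinner))
    simpa [RRBP, Function.comp] using this
  -- R2 converges to the sum of the uplink limits
  have hR2 : Tendsto (fun M => R2P lam τ (pp M) (pu M) (pr M) βA βB KA KB i (M:ℝ)) atTop
      (𝓝 (lam * logb 2 (1 + Eu * psiA i ^ 2 / (psiA i + psiB i))
        + lam * logb 2 (1 + Eu * psiB i ^ 2 / (psiA i + psiB i)))) := by
    have h1 := tendsto_min_atTop_right hRAR hRRB
    have h2 := tendsto_min_atTop_right hRBR hRRA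
    simpa [R2P] using h1.add h2
  -- L1 ≤ L2
  have haD : 0 < Eu * psiA i ^ 2 / (psiA i + psiB i) :=
    div_pos (mul_pos hEu (pow_pos (hψA i) 2)) hD
  have hbD : 0 < Eu * psiB i ^ 2 / (psiA i + psiB i) :=
    div_pos (mul_pos hEu (pow_pos (hψB i) 2)) hD
  have expand : Eu * (psiA i ^ 2 + psiB i ^ 2) / (psiA i + psiB i)
      = Eu * psiA i ^ 2 / (psiA i + psiB i) + Eu * psiB i ^ 2 / (psiA i + psiB i) := by
    rw [mul_add, add_div]
  have hxy : 1 + Eu * (psiA i ^ 2 + psiB i ^ 2) / (psiA i + psiB i)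
      ≤ (1 + Eu * psiA i ^ 2 / (psiA i + psiB i))
        * (1 + Eu * psiB i ^ 2 / (psiA i + psiB i)) := by
    rw [expand]; nlinarith [mul_pos haD hbD]
  have hlog : logb 2 (1 + Eu * (psiA i ^ 2 + psiB i ^ 2) / (psiA i + psiB i))
      ≤ logb 2 (1 + Eu * psiA i ^ 2 / (psiA i + psiB i))
        + logb 2 (1 + Eu * psiB i ^ 2 / (psiA i + psiB i)) := by
    calc logb 2 (1 + Eu * (psiA i ^ 2 + psiB i ^ 2) / (psiA i + psiB i))
        ≤ logb 2 ((1 + Eu * psiA i ^ 2 / (psiA i + psiB i))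
            * (1 + Eu * psiB i ^ 2 / (psiA i + psiB i))) :=
          Real.logb_le_logb_of_le one_lt_two hc1 hxy
      _ = _ := Real.logb_mul hcA.ne' hcB.ne'
  have key : lam * logb 2 (1 + Eu * (psiA i ^ 2 + psiB i ^ 2) / (psiA i + psiB i))
      ≤ lam * logb 2 (1 + Eu * psiA i ^ 2 / (psiA i + psiB i))
        + lam * logb 2 (1 + Eu * psiB i ^ 2 / (psiA i + psiB i)) := by
    have h := mul_le_mul_of_nonneg_left hlog hlam0.le
    rw [mul_add lam] at h; exact h
  have hmin := hR1.min hR2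
  rw [min_eq_left key] at hmin
  simpa [RtotP] using hmin

end MainAux

/-- Power-scaling Case II: if `α = 1`, `0 < ε < 1` and `γ > 0` then
`R̃_i(M) → λ·log₂(1 + E_u·(ψ_{AR,i}² + ψ_{BR,i}²)/(ψ_{AR,i} + ψ_{BR,i}))`:
the asymptotic SE is determined by the uplink phase and is independent of `E_r`. -/
theorem power_scaling_case_II
    (N : ℕ) (hN : 1 ≤ N) (i : Fin N) (T τ : ℝ) (hτ : 0 < τ) (hT : τ < T)
    (lam : ℝ) (hlam : lam = (T - τ) / (2 * T))
    (Eu Er Ep : ℝ) (hEu : 0 < Eu) (hEr : 0 < Er) (hEp : 0 < Ep)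
    (βA βB KA KB : Fin N → ℝ)
    (hβA : ∀ j, 0 < βA j) (hβB : ∀ j, 0 < βB j)
    (hKA : ∀ j, 0 < KA j) (hKB : ∀ j, 0 < KB j)
    (α ε γ : ℝ) (hα : α = 1) (hε0 : 0 < ε) (hε1 : ε < 1) (hγ : 0 < γ)
    (psiA psiB : Fin N → ℝ)
    (hpsiA : ∀ j, psiA j = βA j * KA j / (KA j + 1))
    (hpsiB : ∀ j, psiB j = βB j * KB j / (KB j + 1)) :
    Tendsto (fun M : ℕ =>
        RtotP lam τ (Ep / (M : ℝ) ^ γ) (Eu / (M : ℝ) ^ α) (Er / (M : ℝ) ^ ε)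
          βA βB KA KB i (M : ℝ))
      atTop
      (𝓝 (lam * logb 2 (1 + Eu * ((psiA i) ^ 2 + (psiB i) ^ 2) / (psiA i + psiB i)))) := by
  subst hα
  have hlam0 : 0 < lam := by rw [hlam]; apply div_pos <;> linarith
  refine main_aux i τ lam Eu hlam0 hEu βA βB KA KB hβA hβB hKA hKB psiA psiB hpsiA hpsiB
    (fun M : ℕ => Ep / (M : ℝ) ^ γ) (fun M : ℕ => Eu / (M : ℝ) ^ (1:ℝ))
    (fun M : ℕ => Er / (M : ℝ) ^ ε) ?_ ?_ ?_ ?_ ?_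
  · exact tendsto_const_nhds.div_atTop
      ((tendsto_rpow_atTop hγ).comp tendsto_natCast_atTop_atTop)
  · exact tendsto_const_nhds.div_atTop
      ((tendsto_rpow_atTop one_pos).comp tendsto_natCast_atTop_atTop)
  · exact tendsto_const_nhds.div_atTop
      ((tendsto_rpow_atTop hε0).comp tendsto_natCast_atTop_atTop)
  · refine Tendsto.congr' ?_ (tendsto_const_nhds : Tendsto (fun _ : ℕ => Eu) atTop (𝓝 Eu))
    filter_upwards [eventually_ge_atTop 1] with M hM
    have hM0 : (0:ℝ) < (M:ℝ) := by exact_mod_cast Nat.lt_of_lt_of_le Nat.zero_lt_one hM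
    rw [Real.rpow_one]
    field_simp
  · have h1 : Tendsto (fun M : ℕ => Er * (M:ℝ) ^ (1 - ε)) atTop atTop :=
      Filter.Tendsto.const_mul_atTop hEr
        ((tendsto_rpow_atTop (by linarith)).comp tendsto_natCast_atTop_atTop)
    refine Tendsto.congr' ?_ h1
    filter_upwards [eventually_ge_atTop 1] with M hM
    have hM0 : (0:ℝ) < (M:ℝ) := by exact_mod_cast Nat.lt_of_lt_of_le Nat.zero_lt_one hM
    have hMε : ((M:ℝ) ^ ε) ≠ 0 := (Real.rpow_pos_of_pos hM0 ε).ne'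
    rw [Real.rpow_sub hM0, Real.rpow_one]
    field_simp
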